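/- Schouten bracket formula: under the hypotheses that R is hereditary, Ω₀ compatible with R, H₀ defined by Ω₀(H₀ξ,y) = ξ(y) with x ↦ i_xΩ₀ bijective, Hₙ = RⁿH₀, Ωₙ = Ω₀∘Rⁿ, one has, for all 1-forms ξ, η, ζ: [Hₘ,Hₙ](ξ,η,ζ) = 4 dΩ_{m+n}(H₀ξ, H₀η, H₀ζ) − { dΩₘ(Hₙξ, H₀η, H₀ζ) + dΩₙ(Hₘξ, H₀η, H₀ζ) + cyclic permutations of (ξ,η,ζ) }. -/
import Mathlib


/-- A 1-form: an `F`-linear map `X → F`. -/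
def OneForm {F X : Type*} [CommRing F] [AddCommGroup X] [Module F X]
    (ξ : X → F) : Prop :=
  (∀ y z : X, ξ (y + z) = ξ y + ξ z) ∧ ∀ (a : F) (y : X), ξ (a • y) = a * ξ y

/-- The Lie derivative of a 1-form: `(L_xζ)(y) = x(ζ(y)) − ζ([x,y])`. -/
def lieDeriv1 {F X : Type*} [Ring F] [LieRing X] (ρ : X → F → F)
    (x : X) (ζ : X → F) : X → F :=
  fun y => ρ x (ζ y) - ζ ⁅x, y⁆

/-- The Chevalley–Eilenberg differential of a 2-form. -/
def ceDiff2 {F X : Type*} [Ring F] [LieRing X]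
    (ρ : X → F → F) (Ω : X → X → F) : X → X → X → F :=
  fun x y z =>
    ρ x (Ω y z) - ρ y (Ω x z) + ρ z (Ω x y)
    - Ω ⁅x, y⁆ z + Ω ⁅x, z⁆ y - Ω ⁅y, z⁆ x

/-- Schouten bracket formula: for `R` hereditary, `Ω₀` compatible with `R`,
`H₀` the inverse of `x ↦ i_xΩ₀`, `Hₙ = RⁿH₀`, `Ωₙ = Ω₀∘Rⁿ`:
`[Hₘ,Hₙ](ξ,η,ζ) = 4 dΩ_{m+n}(H₀ξ,H₀η,H₀ζ)
  − {dΩₘ(Hₙξ,H₀η,H₀ζ) + dΩₙ(Hₘξ,H₀η,H₀ζ) + cyclic(ξ,η,ζ)}`. -/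
theorem schouten_bracket_formula
    {F X : Type*} [CommRing F] [Algebra ℝ F] [LieRing X] [LieAlgebra ℝ X]
    [Module F X]
    (ρ : X → F → F)
    (hρadd : ∀ (x : X) (a b : F), ρ x (a + b) = ρ x a + ρ x b)
    (hρderiv : ∀ (x : X) (a b : F), ρ x (a * b) = ρ x a * b + a * ρ x b)
    (hρlie : ∀ (x y : X) (a : F), ρ ⁅x, y⁆ a = ρ x (ρ y a) - ρ y (ρ x a))
    (hρaddX : ∀ (x y : X) (a : F), ρ (x + y) a = ρ x a + ρ y a)
    (hρsmulX : ∀ (a : F) (x : X) (b : F), ρ (a • x) b = a * ρ x b)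
    (hlie_smul : ∀ (x : X) (a : F) (y : X),
      ⁅x, a • y⁆ = a • ⁅x, y⁆ + ρ x a • y)
    (R : X →ₗ[F] X)
    (hR : ∀ x y : X,
      ⁅R x, R y⁆ - R ⁅R x, y⁆ - R ⁅x, R y⁆ + R (R ⁅x, y⁆) = 0)
    (Ω : X →ₗ[F] X →ₗ[F] F)
    (halt : ∀ x : X, Ω x x = 0)
    (hcompat : ∀ x y : X, Ω (R x) y = Ω x (R y))
    (H₀ : (X → F) → X)
    (hH : ∀ ξ : X → F, OneForm ξ → ∀ y : X, Ω (H₀ ξ) y = ξ y)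
    (hinv : ∀ ξ : X → F, OneForm ξ → ∃! x : X, ∀ y : X, Ω x y = ξ y) :
    ∀ (m n : ℕ) (ξ η ζ : X → F),
      OneForm ξ → OneForm η → OneForm ζ →
      ξ ((R ^ m) (H₀ (lieDeriv1 ρ ((R ^ n) (H₀ η)) ζ)))
      + ξ ((R ^ n) (H₀ (lieDeriv1 ρ ((R ^ m) (H₀ η)) ζ)))
      + η ((R ^ m) (H₀ (lieDeriv1 ρ ((R ^ n) (H₀ ζ)) ξ)))
      + η ((R ^ n) (H₀ (lieDeriv1 ρ ((R ^ m) (H₀ ζ)) ξ)))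
      + ζ ((R ^ m) (H₀ (lieDeriv1 ρ ((R ^ n) (H₀ ξ)) η)))
      + ζ ((R ^ n) (H₀ (lieDeriv1 ρ ((R ^ m) (H₀ ξ)) η)))
      = 4 * ceDiff2 ρ (fun a b => Ω ((R ^ (m + n)) a) b)
            (H₀ ξ) (H₀ η) (H₀ ζ)
        - (ceDiff2 ρ (fun a b => Ω ((R ^ m) a) b)
              ((R ^ n) (H₀ ξ)) (H₀ η) (H₀ ζ)
           + ceDiff2 ρ (fun a b => Ω ((R ^ n) a) b)
              ((R ^ m) (H₀ ξ)) (H₀ η) (H₀ ζ)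
           + ceDiff2 ρ (fun a b => Ω ((R ^ m) a) b)
              ((R ^ n) (H₀ η)) (H₀ ζ) (H₀ ξ)
           + ceDiff2 ρ (fun a b => Ω ((R ^ n) a) b)
              ((R ^ m) (H₀ η)) (H₀ ζ) (H₀ ξ)
           + ceDiff2 ρ (fun a b => Ω ((R ^ m) a) b)
              ((R ^ n) (H₀ ζ)) (H₀ ξ) (H₀ η)
           + ceDiff2 ρ (fun a b => Ω ((R ^ n) a) b)
              ((R ^ m) (H₀ ζ)) (H₀ ξ) (H₀ η)) := by

  intro m n ξ η ζ hξ hη hζ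
  have hskew : ∀ x y : X, Ω x y = - Ω y x := by
    intro x y
    have h := halt (x + y)
    simp only [map_add, LinearMap.add_apply, halt] at h
    linear_combination h
  have hRc : ∀ (k : ℕ) (x : X), (R ^ k) (R x) = R ((R ^ k) x) := by
    intro k x
    have h : (R ^ k * R) x = (R * R ^ k) x := by rw [← pow_succ, ← pow_succ']
    simpa [Module.End.mul_apply] using h
  have hcp : ∀ (k : ℕ) (x y : X), Ω ((R ^ k) x) y = Ω x ((R ^ k) y) := by
    intro k
    induction k with
    | zero => intro x y; simp
    | succ k ih =>
      intro x y
      rw [pow_succ]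
      simp only [Module.End.mul_apply]
      rw [ih (R x) y, hcompat, hRc k y]
  have hpow : ∀ (i j : ℕ) (x : X), (R ^ i) ((R ^ j) x) = (R ^ (i + j)) x := by
    intro i j x
    rw [pow_add]
    simp [Module.End.mul_apply]
  have hR1 : ∀ x y : X, ⁅R x, R y⁆ = R ⁅R x, y⁆ + R ⁅x, R y⁆ - R (R ⁅x, y⁆) := by
    intro x y
    have h : ⁅R x, R y⁆ - (R ⁅R x, y⁆ + R ⁅x, R y⁆ - R (R ⁅x, y⁆)) = 0 := by
      rw [← hR x y]; abel
    exact sub_eq_zero.mp h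
  have hsucc : ∀ (k : ℕ) (w : X), (R ^ (k + 1)) w = R ((R ^ k) w) := by
    intro k w; rw [pow_succ']; rfl
  have hC1 : ∀ (j : ℕ) (x y : X),
      ⁅R x, (R ^ j) y⁆ = R ⁅x, (R ^ j) y⁆ + (R ^ j) ⁅R x, y⁆ - R ((R ^ j) ⁅x, y⁆) := by
    intro j
    induction j with
    | zero => intro x y; simp
    | succ j ih =>
      intro x y
      simp only [hsucc j]
      rw [hR1 x ((R ^ j) y), ih x y]
      simp only [map_add, map_sub]
      abel
  have herd : ∀ (i j : ℕ) (x y : X),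
      ⁅(R ^ i) x, (R ^ j) y⁆
      = (R ^ i) ⁅x, (R ^ j) y⁆ + (R ^ j) ⁅(R ^ i) x, y⁆ - (R ^ i) ((R ^ j) ⁅x, y⁆) := by
    intro i
    induction i with
    | zero => intro j x y; simp
    | succ i ih =>
      intro j x y
      simp only [hsucc i]
      rw [hC1 j ((R ^ i) x) y, ih j x y]
      simp only [map_add, map_sub]
      abel
  have hρ0 : ∀ x : X, ρ x 0 = 0 := by
    intro x
    have h := hρadd x 0 0
    rw [add_zero] at h
    linear_combination -h
  have hρneg : ∀ (x : X) (v : F), ρ x (-v) = - ρ x v := by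
    intro x v
    have h := hρadd x v (-v)
    rw [add_neg_cancel, hρ0] at h
    linear_combination -h
  have hof : ∀ (x : X) (θ : X → F), OneForm θ → OneForm (lieDeriv1 ρ x θ) := by
    intro x θ hθ
    obtain ⟨ha, hs⟩ := hθ
    constructor
    · intro y z
      simp only [lieDeriv1, lie_add, ha]
      rw [hρadd]
      ring
    · intro t y
      simp only [lieDeriv1, hlie_smul, hs]
      rw [ha, hs, hs, hρderiv]
      ring
  have hterm : ∀ (i j : ℕ) (α β γ : X → F), OneForm α → OneForm β → OneForm γ →
      α ((R ^ i) (H₀ (lieDeriv1 ρ ((R ^ j) (H₀ β)) γ)))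
      = Ω (H₀ γ) ⁅(R ^ j) (H₀ β), (R ^ i) (H₀ α)⁆
        - ρ ((R ^ j) (H₀ β)) (Ω (H₀ γ) ((R ^ i) (H₀ α))) := by
    intro i j α β γ hα hβ hγ
    have hLf : OneForm (lieDeriv1 ρ ((R ^ j) (H₀ β)) γ) := hof _ _ hγ
    rw [← hH α hα ((R ^ i) (H₀ (lieDeriv1 ρ ((R ^ j) (H₀ β)) γ)))]
    rw [← hcp i (H₀ α) (H₀ (lieDeriv1 ρ ((R ^ j) (H₀ β)) γ))]
    rw [hskew]
    rw [hH _ hLf]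
    simp only [lieDeriv1]
    rw [← hH γ hγ ((R ^ i) (H₀ α)), ← hH γ hγ ⁅(R ^ j) (H₀ β), (R ^ i) (H₀ α)⁆]
    ring
  rw [hterm m n ξ η ζ hξ hη hζ, hterm n m ξ η ζ hξ hη hζ,
      hterm m n η ζ ξ hη hζ hξ, hterm n m η ζ ξ hη hζ hξ,
      hterm m n ζ ξ η hζ hξ hη, hterm n m ζ ξ η hζ hξ hη]
  simp only [ceDiff2]
  simp only [herd, map_add, map_sub, hpow]
  have hnm : ∀ w : X, (R ^ (n + m)) w = (R ^ (m + n)) w := fun w => by rw [Nat.add_comm]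
  simp only [hnm]
  have hbr : ∀ (k : ℕ) (z u v : X), Ω z ((R ^ k) ⁅u, v⁆) = - Ω z ((R ^ k) ⁅v, u⁆) := by
    intro k z u v
    rw [← lie_skew u v, map_neg, map_neg]
  have hOB1 : ∀ (k : ℕ) (u v z : X),
      Ω ((R ^ k) ⁅u, v⁆) z = - Ω z ((R ^ k) ⁅u, v⁆) := by
    intro k u v z
    exact hskew _ _
  have hOB2 : ∀ (k j : ℕ) (w x : X),
      Ω ((R ^ k) w) ((R ^ j) x) = - Ω x ((R ^ (j + k)) w) := by
    intro k j w x
    rw [hskew ((R ^ k) w) ((R ^ j) x), hcp j x ((R ^ k) w), hpow j k w]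
  have hrw1 : ∀ (P : X) (k : ℕ) (u v : X),
      ρ P (Ω u ((R ^ k) v)) = ρ P (Ω ((R ^ k) u) v) :=
    fun P k u v => congrArg (ρ P) (hcp k u v).symm
  have hrw2 : ∀ (P : X) (k : ℕ) (u v : X),
      ρ P (Ω ((R ^ k) u) v) = - ρ P (Ω ((R ^ k) v) u) := by
    intro P k u v
    rw [show Ω ((R ^ k) u) v = -(Ω ((R ^ k) v) u) from by rw [hcp k u v, hskew], hρneg]
  simp only [hOB2, hnm, hOB1]
  rw [hbr n (H₀ ζ) (H₀ η) ((R ^ m) (H₀ ξ)),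
      hbr (m + n) (H₀ ζ) (H₀ η) (H₀ ξ),
      hbr m (H₀ ζ) (H₀ η) ((R ^ n) (H₀ ξ)),
      hbr n (H₀ ξ) (H₀ ζ) ((R ^ m) (H₀ η)),
      hbr (m + n) (H₀ ξ) (H₀ ζ) (H₀ η),
      hbr m (H₀ ξ) (H₀ ζ) ((R ^ n) (H₀ η)),
      hbr n (H₀ η) (H₀ ξ) ((R ^ m) (H₀ ζ)),
      hbr m (H₀ η) (H₀ ξ) ((R ^ n) (H₀ ζ)),
      hbr (m + n) (H₀ η) (H₀ ζ) (H₀ ξ)]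
  simp only [hrw1]
  rw [hrw2 ((R ^ n) (H₀ η)) m (H₀ ζ) (H₀ ξ),
      hrw2 ((R ^ m) (H₀ η)) n (H₀ ζ) (H₀ ξ),
      hrw2 (H₀ ζ) (m + n) (H₀ η) (H₀ ξ),
      hrw2 (H₀ ξ) (m + n) (H₀ ζ) (H₀ η),
      hrw2 (H₀ η) (m + n) (H₀ ζ) (H₀ ξ)]
  ring
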